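/- The Bernstein relation holds for the Demazure–Lusztig operators: for λ = (λ_1, …, λ_n) ∈ ℤ^n set θ_λ = X_1^{λ_1}⋯X_n^{λ_n} (the operator of multiplication by x_1^{−λ_1}⋯x_n^{−λ_n}) and let s_iλ be λ with its i-th and (i+1)-st entries exchanged. Then x_1^{−λ_1}⋯x_n^{−λ_n} − x_1^{−(s_iλ)_1}⋯x_n^{−(s_iλ)_n} is divisible by x_i^{−1}x_{i+1} − 1 in R, and as operators on R: T_i θ_λ = θ_{s_iλ} T_i + (1 − q)·M_{i,λ}, where M_{i,λ} is multiplication by the Laurent polynomial (x_1^{−λ_1}⋯x_n^{−λ_n} − x_1^{−(s_iλ)_1}⋯x_n^{−(s_iλ)_n})/(x_i^{−1}x_{i+1} − 1) (i.e., (θ_λ − θ_{s_iλ})/(θ_{−α_i} − 1) with θ_{−α_i} = X_i X_{i+1}^{−1}). -/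

import Mathlib

noncomputable section

/-- The field `ℂ(q)` of rational functions in the indeterminate `q`. -/
abbrev KK : Type := RatFunc ℂ

/-- The ring `R = ℂ(q)[x_1^{±1}, …, x_n^{±1}]` of Laurent polynomials. -/
abbrev RL (n : ℕ) : Type := AddMonoidAlgebra KK (Fin n →₀ ℤ)

/-- The parameter `q`, an indeterminate over `ℂ`. -/
def qK : KK := RatFunc.X

/-- `q` viewed as a constant in the Laurent polynomial ring `R`. -/
def qc (n : ℕ) : RL n := AddMonoidAlgebra.single 0 qK

/-- The monomial `x^μ` for an exponent vector `μ ∈ ℤ^n`. -/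
def xpow (n : ℕ) (μ : Fin n →₀ ℤ) : RL n := AddMonoidAlgebra.single μ 1

/-- The `ℂ(q)`-linear substitution exchanging the variables `x_a` and `x_b`. -/
def sOp {n : ℕ} (a b : Fin n) (f : RL n) : RL n :=
  AddMonoidAlgebra.ofCoeff
    (Finsupp.equivMapDomain (Finsupp.equivCongrLeft (Equiv.swap a b)) f.coeff)

open scoped Classical in
/-- `divBy d a` is a quotient of `a` by `d` when `d ∣ a`, and `0` otherwise. -/
def divBy {n : ℕ} (d a : RL n) : RL n := if h : d ∣ a then h.choose else 0

/-- Exponent vector of `x_b x_a⁻¹`. -/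
def dExp {n : ℕ} (a b : Fin n) : Fin n →₀ ℤ := Finsupp.single b 1 - Finsupp.single a 1

/-- The Demazure–Lusztig operator
`T f = (f − s f)/(x_b x_a⁻¹ − 1) − q·(f − x_b x_a⁻¹·(s f))/(x_b x_a⁻¹ − 1)`
(for `a = i`, `b = i+1` this is `T_i`). -/
def DLop {n : ℕ} (a b : Fin n) (f : RL n) : RL n :=
  divBy (xpow n (dExp a b) - 1)
    ((1 - qc n) * f - (1 - qc n * xpow n (dExp a b)) * sOp a b f)

/-- The operator `X_j`: multiplication by `x_j⁻¹`. -/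
def Xop {n : ℕ} (j : Fin n) (f : RL n) : RL n := xpow n (Finsupp.single j (-1)) * f

end

noncomputable section

/-- The exponent vector `−λ` of the monomial `x^{−λ}`; `θ_λ` is multiplication by it. -/
def thetaExp (n : ℕ) (lam : Fin n → ℤ) : Fin n →₀ ℤ :=
  Finsupp.equivFunOnFinite.symm (fun j => - lam j)

end

noncomputable section BernsteinAux

open Finsupp AddMonoidAlgebra

variable {n : ℕ}

/-- `sOp` as an algebra equivalence. -/
def sAlg (a b : Fin n) : RL n ≃ₐ[KK] RL n :=
  AddMonoidAlgebra.domCongr KK KK (Finsupp.domCongr (Equiv.swap a b))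

lemma sOp_eq_sAlg (a b : Fin n) (f : RL n) : sOp a b f = sAlg a b f := by
  ext ν
  simp [sOp, sAlg, Finsupp.equivMapDomain_apply]

/-- Swap of exponent vectors. -/
def sE (a b : Fin n) (μ : Fin n →₀ ℤ) : Fin n →₀ ℤ :=
  Finsupp.domCongr (Equiv.swap a b) μ

lemma sE_apply (a b : Fin n) (μ : Fin n →₀ ℤ) (j : Fin n) :
    sE a b μ j = μ (Equiv.swap a b j) := by
  simp [sE, Finsupp.equivMapDomain_apply]

lemma xpow_mul (μ ν : Fin n →₀ ℤ) : xpow n μ * xpow n ν = xpow n (μ + ν) := by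
  simp [xpow, AddMonoidAlgebra.single_mul_single]

lemma xpow_zero : xpow n 0 = (1 : RL n) := rfl

lemma sOp_xpow (a b : Fin n) (μ : Fin n →₀ ℤ) :
    sOp a b (xpow n μ) = xpow n (sE a b μ) := by
  rw [sOp_eq_sAlg]
  simpa [sAlg, xpow, sE] using AddMonoidAlgebra.domCongr_single KK KK
    (Finsupp.domCongr (Equiv.swap a b)) μ (1 : KK)

lemma sOp_mul (a b : Fin n) (f g : RL n) :
    sOp a b (f * g) = sOp a b f * sOp a b g := by
  simp [sOp_eq_sAlg, map_mul]

lemma sE_thetaExp (a b : Fin n) (lam : Fin n → ℤ) :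
    sE a b (thetaExp n lam) = thetaExp n (lam ∘ Equiv.swap a b) := by
  ext j
  simp [sE_apply, thetaExp]

lemma sE_add_smul (a b : Fin n) (hab : a ≠ b) (μ : Fin n →₀ ℤ) :
    μ = sE a b μ + (μ b - μ a) • dExp a b := by
  ext j
  simp only [Finsupp.add_apply, Finsupp.coe_smul, Pi.smul_apply, dExp, Finsupp.sub_apply,
    Finsupp.single_apply, sE_apply, smul_eq_mul]
  rcases eq_or_ne j a with rfl | hja
  · rw [Equiv.swap_apply_left, if_neg (Ne.symm hab), if_pos rfl]
    ring
  rcases eq_or_ne j b with rfl | hjb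
  · rw [Equiv.swap_apply_right, if_pos rfl, if_neg hab]
    ring
  · rw [Equiv.swap_apply_of_ne_of_ne hja hjb, if_neg (Ne.symm hjb), if_neg (Ne.symm hja)]
    ring

lemma xpow_nsmul (δ : Fin n →₀ ℤ) (m : ℕ) : xpow n (m • δ) = (xpow n δ) ^ m := by
  simp [xpow, AddMonoidAlgebra.single_pow]

lemma dvd_xpow_zsmul_sub_one (δ : Fin n →₀ ℤ) (k : ℤ) :
    (xpow n δ - 1) ∣ (xpow n (k • δ) - 1) := by
  rcases le_or_gt 0 k with hk | hk
  · lift k to ℕ using hk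
    rw [natCast_zsmul, xpow_nsmul]
    simpa using sub_dvd_pow_sub_pow (xpow n δ) 1 k
  · obtain ⟨m, rfl⟩ : ∃ m : ℕ, k = -(m : ℤ) := ⟨k.natAbs, by omega⟩
    have key : xpow n ((-(m : ℤ)) • δ) - 1
        = -(xpow n ((-(m : ℤ)) • δ)) * (xpow n ((m : ℤ) • δ) - 1) := by
      rw [neg_mul, mul_sub, mul_one, xpow_mul, ← add_zsmul]
      simp [xpow_zero]
    rw [key, natCast_zsmul, xpow_nsmul]
    exact Dvd.dvd.mul_left (by simpa using sub_dvd_pow_sub_pow (xpow n δ) 1 m) _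

lemma dvd_sub_sE (a b : Fin n) (hab : a ≠ b) (μ : Fin n →₀ ℤ) :
    (xpow n (dExp a b) - 1) ∣ (xpow n μ - xpow n (sE a b μ)) := by
  have h := sE_add_smul a b hab μ
  have h2 : xpow n μ - xpow n (sE a b μ)
      = xpow n (sE a b μ) * (xpow n ((μ b - μ a) • dExp a b) - 1) := by
    rw [mul_sub, mul_one, xpow_mul, ← h]
  rw [h2]
  exact (dvd_xpow_zsmul_sub_one _ _).mul_left _

lemma single_eq_xpow_mul (μ : Fin n →₀ ℤ) (c : KK) :
    (AddMonoidAlgebra.single μ c : RL n) = xpow n μ * AddMonoidAlgebra.single 0 c := by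
  rw [xpow, AddMonoidAlgebra.single_mul_single, one_mul, add_zero]

lemma dvd_sub_sOp (a b : Fin n) (hab : a ≠ b) (f : RL n) :
    (xpow n (dExp a b) - 1) ∣ (f - sOp a b f) := by
  induction f using AddMonoidAlgebra.induction_linear with
  | zero => simp [sOp_eq_sAlg]
  | add f g hf hg =>
      have e : (show RL n from f + g) - sOp a b (f + g)
          = ((show RL n from f) - sOp a b f) + ((show RL n from g) - sOp a b g) := by
        simp only [sOp_eq_sAlg, map_add]
        ring
      rw [e]
      exact dvd_add hf hg
  | single μ c =>
      have h2 : sOp a b (AddMonoidAlgebra.single μ c : RL n) = AddMonoidAlgebra.single (sE a b μ) c := by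
        simp [sOp, sE, Finsupp.equivMapDomain_single, ← AddMonoidAlgebra.ofCoeff_single]
      have h3 : (AddMonoidAlgebra.single μ c - AddMonoidAlgebra.single (sE a b μ) c : RL n)
          = (xpow n μ - xpow n (sE a b μ)) * AddMonoidAlgebra.single 0 c := by
        rw [sub_mul, ← single_eq_xpow_mul, ← single_eq_xpow_mul]
      rw [h2, h3]
      exact (dvd_sub_sE a b hab μ).mul_right _

lemma divBy_spec {d x : RL n} (h : d ∣ x) : d * divBy d x = x := by
  rw [divBy, dif_pos h]
  exact h.choose_spec.symm

lemma D_ne_zero (a b : Fin n) (hab : a ≠ b) : xpow n (dExp a b) - 1 ≠ 0 := by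
  intro h
  have h1 : (AddMonoidAlgebra.single (dExp a b) (1 : KK) : RL n) = AddMonoidAlgebra.single 0 1 := by
    have h2 := sub_eq_zero.mp h
    rw [AddMonoidAlgebra.one_def] at h2
    exact h2
  rcases AddMonoidAlgebra.single_inj.mp h1 with ⟨h0, -⟩ | ⟨h0, -⟩
  · have hb := DFunLike.congr_fun h0 b
    simp [dExp, Finsupp.single_apply, hab] at hb
  · exact one_ne_zero h0

lemma dvd_N (a b : Fin n) (hab : a ≠ b) (g : RL n) :
    (xpow n (dExp a b) - 1) ∣
      ((1 - qc n) * g - (1 - qc n * xpow n (dExp a b)) * sOp a b g) := by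
  have key : (1 - qc n) * g - (1 - qc n * xpow n (dExp a b)) * sOp a b g
      = (1 - qc n) * (g - sOp a b g) + qc n * ((xpow n (dExp a b) - 1) * sOp a b g) := by
    ring
  rw [key]
  exact dvd_add ((dvd_sub_sOp a b hab g).mul_left _) ((dvd_mul_right _ _).mul_left _)

theorem bernstein_general (a b : Fin n) (hab : a ≠ b) (lam : Fin n → ℤ) :
    (xpow n (dExp a b) - 1) ∣
        (xpow n (thetaExp n lam) - xpow n (thetaExp n (lam ∘ Equiv.swap a b)))
    ∧ ∀ f : RL n,
        DLop a b (xpow n (thetaExp n lam) * f)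
          = xpow n (thetaExp n (lam ∘ Equiv.swap a b)) * DLop a b f
            + (1 - qc n) *
                (divBy (xpow n (dExp a b) - 1)
                  (xpow n (thetaExp n lam) -
                    xpow n (thetaExp n (lam ∘ Equiv.swap a b))) * f) := by
  have hθ' : thetaExp n (lam ∘ Equiv.swap a b) = sE a b (thetaExp n lam) :=
    (sE_thetaExp a b lam).symm
  have hdvd1 : (xpow n (dExp a b) - 1) ∣
      (xpow n (thetaExp n lam) - xpow n (thetaExp n (lam ∘ Equiv.swap a b))) := by
    rw [hθ']; exact dvd_sub_sE a b hab _
  refine ⟨hdvd1, fun f => ?_⟩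
  have hsmul : sOp a b (xpow n (thetaExp n lam) * f)
      = xpow n (thetaExp n (lam ∘ Equiv.swap a b)) * sOp a b f := by
    rw [sOp_mul, sOp_xpow, sE_thetaExp]
  rw [DLop, DLop]
  apply mul_left_cancel₀ (D_ne_zero a b hab)
  linear_combination divBy_spec (dvd_N a b hab (xpow n (thetaExp n lam) * f))
    - xpow n (thetaExp n (lam ∘ Equiv.swap a b)) * divBy_spec (dvd_N a b hab f)
    - ((1 - qc n) * f) * divBy_spec hdvd1
    - (1 - qc n * xpow n (dExp a b)) * hsmul

end BernsteinAux

/-- Statement 11: the Bernstein relation for the Demazure–Lusztig operators.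
The difference `x^{−λ} − x^{−s_iλ}` is divisible by `x_i⁻¹x_{i+1} − 1`, and
`T_i θ_λ = θ_{s_iλ} T_i + (1 − q)·M_{i,λ}` where `M_{i,λ}` is multiplication by
`(x^{−λ} − x^{−s_iλ})/(x_i⁻¹x_{i+1} − 1)`. -/
theorem bernstein_relation (n : ℕ) (i : ℕ) (hi : i + 1 < n) (lam : Fin n → ℤ) :
    (xpow n (dExp (⟨i, by omega⟩ : Fin n) ⟨i + 1, hi⟩) - 1) ∣
        (xpow n (thetaExp n lam) -
          xpow n (thetaExp n (lam ∘ Equiv.swap (⟨i, by omega⟩ : Fin n) ⟨i + 1, hi⟩)))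
    ∧ ∀ f : RL n,
        DLop (⟨i, by omega⟩ : Fin n) ⟨i + 1, hi⟩ (xpow n (thetaExp n lam) * f)
          = xpow n (thetaExp n (lam ∘ Equiv.swap (⟨i, by omega⟩ : Fin n) ⟨i + 1, hi⟩)) *
              DLop (⟨i, by omega⟩ : Fin n) ⟨i + 1, hi⟩ f
            + (1 - qc n) *
                (divBy (xpow n (dExp (⟨i, by omega⟩ : Fin n) ⟨i + 1, hi⟩) - 1)
                  (xpow n (thetaExp n lam) -
                    xpow n (thetaExp n
                      (lam ∘ Equiv.swap (⟨i, by omega⟩ : Fin n) ⟨i + 1, hi⟩))) * f) :=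
  bernstein_general _ _ (by simp only [ne_eq, Fin.mk.injEq]; omega) lam
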